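/- For n = 2 and any m̄ ≥ 1, the doubly-rooted digraph G_2 on vertices {1,2} with source 1 and target 2, whose edges are a_{2ℓ-1} = (1,2) and a_{2ℓ} = (2,1) for ℓ = 1,...,m̄, together with a loop a_{2m̄+1} = (1,1), an edge a_{2m̄+2} = (1,2), and a loop a_{2m̄+3} = (2,2), has exactly ((m̄+1)!)²·(m̄+1) directed Eulerian trails from 1 to 2. -/
import Mathlib


open scoped Classical

noncomputable section

/-- The permutation `σ_M ∈ S_{|M|}` induced by the relative order of `σ` on `M`. -/
def sigmaMPerm {k : ℕ} (σ : Equiv.Perm (Fin k)) (M : Finset (Fin k)) :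
    Equiv.Perm (Fin M.card) :=
  (M.orderIsoOfFin rfl).toEquiv.trans
    ((σ.subtypeEquiv (fun a =>
        ⟨fun h => Finset.mem_image_of_mem _ h, fun h => by
          obtain ⟨b, hb, hba⟩ := Finset.mem_image.mp h
          rwa [← σ.injective hba]⟩)).trans
      ((M.image ⇑σ).orderIsoOfFin
        (Finset.card_image_of_injective M σ.injective)).toEquiv.symm)

/-- `(a_{σ(0)},…,a_{σ(k-1)})` is a directed Eulerian trail from `s` to `t`. -/
def IsEulerianTrail {V : Type*} {k : ℕ} (src tgt : Fin k → V) (s t : V)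
    (σ : Equiv.Perm (Fin k)) : Prop :=
  (∀ h0 : 0 < k, src (σ ⟨0, h0⟩) = s ∧ tgt (σ ⟨k - 1, Nat.sub_lt h0 Nat.one_pos⟩) = t) ∧
  ∀ (j : ℕ) (hj : j + 1 < k), src (σ ⟨j + 1, hj⟩) = tgt (σ ⟨j, Nat.lt_of_succ_lt hj⟩)

/-- The signed sum `S(G,B) = Σ_{σ ∈ P(G)} sgn(σ)·sgn(σ_{M(B)})`. -/
def SGB {V : Type*} {k : ℕ} (src tgt : Fin k → V) (s t : V) (B : Finset (Fin k)) : ℤ :=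
  ∑ σ : Equiv.Perm (Fin k),
    if IsEulerianTrail src tgt s t σ then
      (Equiv.Perm.sign σ : ℤ) * (Equiv.Perm.sign (sigmaMPerm σ B) : ℤ)
    else 0

/-- The standard polynomial `s_k` evaluated at `x`. -/
def sPoly {A : Type*} [Ring A] {k : ℕ} (x : Fin k → A) : A :=
  ∑ π : Equiv.Perm (Fin k), (Equiv.Perm.sign π : ℤ) • (List.ofFn fun i => x (π i)).prod

/-- `q` occurs as a (contiguous) subtrail of the Eulerian trail given by `σ`. -/
def ContainsSubtrail {k l : ℕ} (σ : Equiv.Perm (Fin k)) (q : Fin l → Fin k) : Prop :=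
  ∃ p : ℕ, ∃ _hp : p + l ≤ k, ∀ d : Fin l, σ ⟨p + d, by have := d.isLt; omega⟩ = q d


/-- Source map of the digraph `G₂` (vertices `0,1` standing for `1,2`): edges
`0,…,2m̄-1` alternate `(0,1),(1,0)`; edge `2m̄` is the loop `(0,0)`; edge `2m̄+1`
is `(0,1)`; edge `2m̄+2` is the loop `(1,1)`. -/
def srcG2 (mb : ℕ) : ℕ → ℕ := fun e =>
  if e < 2 * mb then e % 2
  else if e = 2 * mb then 0
  else if e = 2 * mb + 1 then 0
  else 1

/-- Target map of the digraph `G₂`. -/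
def tgtG2 (mb : ℕ) : ℕ → ℕ := fun e =>
  if e < 2 * mb then (e + 1) % 2
  else if e = 2 * mb then 0
  else 1

namespace G2

def uOf (P0 P1 t : ℕ) : ℕ :=
  t - (if P0 < t then 1 else 0) - (if P1 < t then 1 else 0)

def tEnc (P0 P1 u : ℕ) : ℕ :=
  if u < min P0 P1 then u else if u + 1 < max P0 P1 then u + 1 else u + 2

lemma tEnc_le (P0 P1 u : ℕ) : tEnc P0 P1 u ≤ u + 2 := by
  unfold tEnc; split_ifs <;> omega

lemma uOf_spec {mb P0 P1 t : ℕ} (h01 : P0 ≠ P1) (h0 : t ≠ P0) (h1 : t ≠ P1)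
    (h0k : P0 < 2*mb+3) (h1k : P1 < 2*mb+3) (htk : t < 2*mb+3) :
    uOf P0 P1 t ≤ 2*mb ∧ tEnc P0 P1 (uOf P0 P1 t) = t := by
  unfold uOf tEnc; split_ifs <;> omega

lemma tEnc_spec {mb P0 P1 u : ℕ} (h01 : P0 ≠ P1) (h0k : P0 < 2*mb+3) (h1k : P1 < 2*mb+3)
    (hu : u ≤ 2*mb) :
    tEnc P0 P1 u ≠ P0 ∧ tEnc P0 P1 u ≠ P1 ∧ tEnc P0 P1 u < 2*mb+3 ∧
      uOf P0 P1 (tEnc P0 P1 u) = u := by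
  unfold uOf tEnc; split_ifs <;> omega

lemma uOf_succ {P0 P1 : ℕ} (h01 : P0 ≠ P1) (t : ℕ) :
    uOf P0 P1 (t+1) = if t = P0 ∨ t = P1 then uOf P0 P1 t else uOf P0 P1 t + 1 := by
  unfold uOf; split_ifs <;> omega

def feW (mb x : ℕ) : ℕ := if x < mb then 2*x else 2*mb+1

def feInv (mb e : ℕ) : ℕ := if e = 2*mb+1 then mb else e/2

lemma feInv_feW {mb x : ℕ} (h : x ≤ mb) : feInv mb (feW mb x) = x := by
  unfold feW feInv; split_ifs <;> omega

lemma feW_feInv {mb e : ℕ} (h : (e % 2 = 0 ∧ e < 2*mb) ∨ e = 2*mb+1) :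
    feW mb (feInv mb e) = e := by
  unfold feW feInv; split_ifs <;> omega

lemma feInv_le {mb e : ℕ} (h : (e % 2 = 0 ∧ e < 2*mb) ∨ e = 2*mb+1) : feInv mb e ≤ mb := by
  unfold feInv; split_ifs <;> omega


def fN (mb : ℕ) (f : Equiv.Perm (Fin (mb+1))) (j : ℕ) : ℕ :=
  (f ⟨j % (mb+1), Nat.mod_lt _ (Nat.succ_pos mb)⟩ : ℕ)

def bN (mb : ℕ) (b : Equiv.Perm (Fin mb)) (j : ℕ) : ℕ :=
  if h : j < mb then (b ⟨j, h⟩ : ℕ) else 0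

def phiN (mb P0 P1 : ℕ) (fN' bN' : ℕ → ℕ) (t : ℕ) : ℕ :=
  if t = P0 then 2*mb
  else if t = P1 then 2*mb+2
  else if uOf P0 P1 t % 2 = 0 then feW mb (fN' (uOf P0 P1 t / 2))
  else 2 * bN' (uOf P0 P1 t / 2) + 1

def pos0 (mb : ℕ) (p q : Fin (mb+1)) : ℕ := 2*(p:ℕ) + if (q:ℕ) < (p:ℕ) then 1 else 0

def pos1 (mb : ℕ) (p q : Fin (mb+1)) : ℕ := 2*(q:ℕ) + 1 + if (p:ℕ) ≤ (q:ℕ) then 1 else 0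

lemma pos_facts (mb : ℕ) (p q : Fin (mb+1)) :
    pos0 mb p q ≠ pos1 mb p q ∧ pos0 mb p q ≤ 2*mb+1 ∧ pos1 mb p q ≤ 2*mb+2 ∧
    uOf (pos0 mb p q) (pos1 mb p q) (pos0 mb p q) % 2 = 0 ∧
    uOf (pos0 mb p q) (pos1 mb p q) (pos1 mb p q) % 2 = 1 := by
  have := p.isLt; have := q.isLt
  unfold pos0 pos1 uOf; split_ifs <;> omega

def phiV (mb : ℕ) (f : Equiv.Perm (Fin (mb+1))) (b : Equiv.Perm (Fin mb))
    (p q : Fin (mb+1)) (t : ℕ) : ℕ :=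
  phiN mb (pos0 mb p q) (pos1 mb p q) (fN mb f) (bN mb b) t

lemma phiV_lt (mb : ℕ) (f : Equiv.Perm (Fin (mb+1))) (b : Equiv.Perm (Fin mb))
    (p q : Fin (mb+1)) {t : ℕ} (ht : t < 2*mb+3) : phiV mb f b p q t < 2*mb+3 := by
  obtain ⟨hne, hb0, hb1, -, -⟩ := pos_facts mb p q
  unfold phiV phiN
  split_ifs with h1 h2 h3
  · omega
  · omega
  · unfold feW fN; split_ifs <;> omega
  · have hu := (uOf_spec (mb := mb) hne h1 h2 (by omega) (by omega) ht).1
    have hj : uOf (pos0 mb p q) (pos1 mb p q) t / 2 < mb := by omega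
    unfold bN; rw [dif_pos hj]
    have := (b ⟨_, hj⟩).isLt
    omega

lemma phiV_ne_loops (mb : ℕ) (f : Equiv.Perm (Fin (mb+1))) (b : Equiv.Perm (Fin mb))
    (p q : Fin (mb+1)) {t : ℕ} (ht : t < 2*mb+3)
    (h0 : t ≠ pos0 mb p q) (h1 : t ≠ pos1 mb p q) :
    phiV mb f b p q t ≠ 2*mb ∧ phiV mb f b p q t ≠ 2*mb+2 := by
  obtain ⟨hne, hb0, hb1, -, -⟩ := pos_facts mb p q
  have hu := (uOf_spec (mb := mb) hne h0 h1 (by omega) (by omega) ht).1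
  unfold phiV phiN
  rw [if_neg h0, if_neg h1]
  split_ifs with hp
  · unfold feW fN; split_ifs <;> omega
  · have hj : uOf (pos0 mb p q) (pos1 mb p q) t / 2 < mb := by omega
    unfold bN; rw [dif_pos hj]
    have := (b ⟨_, hj⟩).isLt
    omega
lemma phiV_inj (mb : ℕ) (f : Equiv.Perm (Fin (mb+1))) (b : Equiv.Perm (Fin mb))
    (p q : Fin (mb+1)) {t1 t2 : ℕ} (h1 : t1 < 2*mb+3) (h2 : t2 < 2*mb+3)
    (he : phiV mb f b p q t1 = phiV mb f b p q t2) : t1 = t2 := by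
  obtain ⟨hne, hb0, hb1, -, -⟩ := pos_facts mb p q
  by_cases e10 : t1 = pos0 mb p q
  · by_cases e20 : t2 = pos0 mb p q
    · omega
    · exfalso
      have hv1 : phiV mb f b p q t1 = 2*mb := by
        unfold phiV phiN; rw [if_pos e10]
      by_cases e21 : t2 = pos1 mb p q
      · have hv2 : phiV mb f b p q t2 = 2*mb+2 := by
          unfold phiV phiN; rw [if_neg e20, if_pos e21]
        omega
      · exact (phiV_ne_loops mb f b p q h2 e20 e21).1 (by omega)
  · by_cases e20 : t2 = pos0 mb p q
    · exfalso
      have hv2 : phiV mb f b p q t2 = 2*mb := by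
        unfold phiV phiN; rw [if_pos e20]
      by_cases e11 : t1 = pos1 mb p q
      · have hv1 : phiV mb f b p q t1 = 2*mb+2 := by
          unfold phiV phiN; rw [if_neg e10, if_pos e11]
        omega
      · exact (phiV_ne_loops mb f b p q h1 e10 e11).1 (by omega)
    · by_cases e11 : t1 = pos1 mb p q
      · by_cases e21 : t2 = pos1 mb p q
        · omega
        · exfalso
          have hv1 : phiV mb f b p q t1 = 2*mb+2 := by
            unfold phiV phiN; rw [if_neg e10, if_pos e11]
          exact (phiV_ne_loops mb f b p q h2 e20 e21).2 (by omega)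
      · by_cases e21 : t2 = pos1 mb p q
        · exfalso
          have hv2 : phiV mb f b p q t2 = 2*mb+2 := by
            unfold phiV phiN; rw [if_neg e20, if_pos e21]
          exact (phiV_ne_loops mb f b p q h1 e10 e11).2 (by omega)
        · -- both nonspecial
          obtain ⟨hu1, hE1⟩ := uOf_spec (mb := mb) hne e10 e11 (by omega) (by omega) h1
          obtain ⟨hu2, hE2⟩ := uOf_spec (mb := mb) hne e20 e21 (by omega) (by omega) h2
          set u1 := uOf (pos0 mb p q) (pos1 mb p q) t1 with hu1d
          set u2 := uOf (pos0 mb p q) (pos1 mb p q) t2 with hu2d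
          have hu : u1 = u2 := by
            unfold phiV phiN at he
            rw [if_neg e10, if_neg e11, if_neg e20, if_neg e21] at he
            rw [← hu1d, ← hu2d] at he
            split_ifs at he with hp1 hp2 hp2
            · -- both even
              have hx1 : fN mb f (u1/2) ≤ mb := Nat.lt_succ_iff.mp (f _).isLt
              have hx2 : fN mb f (u2/2) ≤ mb := Nat.lt_succ_iff.mp (f _).isLt
              have hfx : fN mb f (u1/2) = fN mb f (u2/2) := by
                have := congrArg (feInv mb) he
                rwa [feInv_feW hx1, feInv_feW hx2] at this
              unfold fN at hfx
              have := f.injective (Fin.ext hfx)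
              have hval : u1/2 % (mb+1) = u2/2 % (mb+1) := congrArg Fin.val this
              rw [Nat.mod_eq_of_lt (by omega), Nat.mod_eq_of_lt (by omega)] at hval
              omega
            · -- even vs odd
              exfalso
              have hj2 : u2/2 < mb := by omega
              unfold bN at he; rw [dif_pos hj2] at he
              have hblt := (b ⟨_, hj2⟩).isLt
              unfold feW fN at he; split_ifs at he <;> omega
            · exfalso
              have hj1 : u1/2 < mb := by omega
              unfold bN at he; rw [dif_pos hj1] at he
              have hblt := (b ⟨_, hj1⟩).isLt
              unfold feW fN at he; split_ifs at he <;> omega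
            · -- both odd
              have hj1 : u1/2 < mb := by omega
              have hj2 : u2/2 < mb := by omega
              unfold bN at he; rw [dif_pos hj1, dif_pos hj2] at he
              have : b ⟨u1/2, hj1⟩ = b ⟨u2/2, hj2⟩ := Fin.ext (by omega)
              have := b.injective this
              have hval : u1/2 = u2/2 := congrArg Fin.val this
              omega
          rw [← hE1, ← hE2, hu]
def phiPerm (mb : ℕ) (f : Equiv.Perm (Fin (mb+1))) (b : Equiv.Perm (Fin mb))
    (p q : Fin (mb+1)) : Equiv.Perm (Fin (2*mb+3)) :=
  Equiv.ofBijective (fun t => ⟨phiV mb f b p q t, phiV_lt mb f b p q t.isLt⟩)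
    (Finite.injective_iff_bijective.mp fun t1 t2 h =>
      Fin.ext (phiV_inj mb f b p q t1.isLt t2.isLt (congrArg Fin.val h)))

lemma phiPerm_apply (mb : ℕ) (f : Equiv.Perm (Fin (mb+1))) (b : Equiv.Perm (Fin mb))
    (p q : Fin (mb+1)) (t : Fin (2*mb+3)) :
    (phiPerm mb f b p q t : ℕ) = phiV mb f b p q t := rfl

lemma src_phiV (mb : ℕ) (f : Equiv.Perm (Fin (mb+1))) (b : Equiv.Perm (Fin mb))
    (p q : Fin (mb+1)) {t : ℕ} (ht : t < 2*mb+3) :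
    srcG2 mb (phiV mb f b p q t) = uOf (pos0 mb p q) (pos1 mb p q) t % 2 := by
  obtain ⟨hne, hb0, hb1, hpar0, hpar1⟩ := pos_facts mb p q
  by_cases h0 : t = pos0 mb p q
  · subst h0
    have hv : phiV mb f b p q (pos0 mb p q) = 2*mb := by unfold phiV phiN; rw [if_pos rfl]
    rw [hv]; unfold srcG2; split_ifs <;> omega
  · by_cases h1 : t = pos1 mb p q
    · subst h1
      have hv : phiV mb f b p q (pos1 mb p q) = 2*mb+2 := by
        unfold phiV phiN; rw [if_neg h0, if_pos rfl]
      rw [hv]; unfold srcG2; split_ifs <;> omega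
    · have hu := (uOf_spec (mb := mb) hne h0 h1 (by omega) (by omega) ht).1
      unfold phiV phiN
      rw [if_neg h0, if_neg h1]
      split_ifs with hp
      · unfold feW fN srcG2; split_ifs <;> omega
      · have hj : uOf (pos0 mb p q) (pos1 mb p q) t / 2 < mb := by omega
        unfold bN; rw [dif_pos hj]
        have := (b ⟨_, hj⟩).isLt
        unfold srcG2; split_ifs <;> omega

lemma tgt_phiV (mb : ℕ) (f : Equiv.Perm (Fin (mb+1))) (b : Equiv.Perm (Fin mb))
    (p q : Fin (mb+1)) {t : ℕ} (ht : t < 2*mb+3) :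
    tgtG2 mb (phiV mb f b p q t) =
      if t = pos0 mb p q ∨ t = pos1 mb p q then uOf (pos0 mb p q) (pos1 mb p q) t % 2
      else (uOf (pos0 mb p q) (pos1 mb p q) t + 1) % 2 := by
  obtain ⟨hne, hb0, hb1, hpar0, hpar1⟩ := pos_facts mb p q
  by_cases h0 : t = pos0 mb p q
  · subst h0
    rw [if_pos (Or.inl rfl)]
    have hv : phiV mb f b p q (pos0 mb p q) = 2*mb := by unfold phiV phiN; rw [if_pos rfl]
    rw [hv]; unfold tgtG2; split_ifs <;> omega
  · by_cases h1 : t = pos1 mb p q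
    · subst h1
      rw [if_pos (Or.inr rfl)]
      have hv : phiV mb f b p q (pos1 mb p q) = 2*mb+2 := by
        unfold phiV phiN; rw [if_neg h0, if_pos rfl]
      rw [hv]; unfold tgtG2; split_ifs <;> omega
    · rw [if_neg (by tauto)]
      have hu := (uOf_spec (mb := mb) hne h0 h1 (by omega) (by omega) ht).1
      unfold phiV phiN
      rw [if_neg h0, if_neg h1]
      split_ifs with hp
      · unfold feW fN tgtG2; split_ifs <;> omega
      · have hj : uOf (pos0 mb p q) (pos1 mb p q) t / 2 < mb := by omega
        unfold bN; rw [dif_pos hj]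
        have := (b ⟨_, hj⟩).isLt
        unfold tgtG2; split_ifs <;> omega

lemma phiPerm_eulerian (mb : ℕ) (f : Equiv.Perm (Fin (mb+1))) (b : Equiv.Perm (Fin mb))
    (p q : Fin (mb+1)) :
    IsEulerianTrail (fun i => srcG2 mb i) (fun i => tgtG2 mb i) 0 1 (phiPerm mb f b p q) := by
  obtain ⟨hne, hb0, hb1, hpar0, hpar1⟩ := pos_facts mb p q
  constructor
  · intro h0
    constructor
    · show srcG2 mb (phiPerm mb f b p q ⟨0, h0⟩ : ℕ) = 0
      rw [phiPerm_apply, src_phiV mb f b p q (by omega : (0:ℕ) < 2*mb+3)]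
      unfold uOf; split_ifs <;> omega
    · show tgtG2 mb (phiPerm mb f b p q ⟨2*mb+3-1, _⟩ : ℕ) = 1
      rw [phiPerm_apply]
      have h22 : (2*mb+3-1 : ℕ) = 2*mb+2 := by omega
      rw [show ((⟨2*mb+3-1, Nat.sub_lt h0 Nat.one_pos⟩ : Fin (2*mb+3)) : ℕ) = 2*mb+2 from h22]
      rw [tgt_phiV mb f b p q (by omega : (2*mb+2:ℕ) < 2*mb+3)]
      split_ifs with h
      · unfold uOf at hpar0 hpar1 ⊢; split_ifs at hpar0 hpar1 ⊢ <;> omega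
      · unfold uOf; split_ifs <;> omega
  · intro j hj
    show srcG2 mb (phiPerm mb f b p q ⟨j+1, hj⟩ : ℕ)
        = tgtG2 mb (phiPerm mb f b p q ⟨j, Nat.lt_of_succ_lt hj⟩ : ℕ)
    rw [phiPerm_apply, phiPerm_apply,
      src_phiV mb f b p q (show (j+1:ℕ) < 2*mb+3 from hj),
      tgt_phiV mb f b p q (show (j:ℕ) < 2*mb+3 by omega)]
    rw [uOf_succ hne j]
    split_ifs <;> omega
def P0of (mb : ℕ) (σ : Equiv.Perm (Fin (2*mb+3))) : ℕ :=
  (σ.symm ⟨2*mb, by omega⟩ : ℕ)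

def P1of (mb : ℕ) (σ : Equiv.Perm (Fin (2*mb+3))) : ℕ :=
  (σ.symm ⟨2*mb+2, by omega⟩ : ℕ)

lemma P0of_lt (mb : ℕ) (σ : Equiv.Perm (Fin (2*mb+3))) : P0of mb σ < 2*mb+3 :=
  (σ.symm _).isLt

lemma P1of_lt (mb : ℕ) (σ : Equiv.Perm (Fin (2*mb+3))) : P1of mb σ < 2*mb+3 :=
  (σ.symm _).isLt

lemma P0of_ne_P1of (mb : ℕ) (σ : Equiv.Perm (Fin (2*mb+3))) : P0of mb σ ≠ P1of mb σ := by
  intro h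
  have h1 : σ.symm (⟨2*mb, by omega⟩ : Fin (2*mb+3)) = σ.symm ⟨2*mb+2, by omega⟩ :=
    Fin.ext h
  have h2 := congrArg Fin.val (σ.symm.injective h1)
  simp at h2

lemma sigma_at_P0of (mb : ℕ) (σ : Equiv.Perm (Fin (2*mb+3))) :
    σ ⟨P0of mb σ, P0of_lt mb σ⟩ = ⟨2*mb, by omega⟩ :=
  σ.apply_symm_apply _

lemma sigma_at_P1of (mb : ℕ) (σ : Equiv.Perm (Fin (2*mb+3))) :
    σ ⟨P1of mb σ, P1of_lt mb σ⟩ = ⟨2*mb+2, by omega⟩ :=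
  σ.apply_symm_apply _
lemma src_loop0 (mb : ℕ) : srcG2 mb (2*mb) = 0 := by unfold srcG2; split_ifs <;> omega
lemma tgt_loop0 (mb : ℕ) : tgtG2 mb (2*mb) = 0 := by unfold tgtG2; split_ifs <;> omega
lemma src_loop1 (mb : ℕ) : srcG2 mb (2*mb+2) = 1 := by unfold srcG2; split_ifs <;> omega
lemma tgt_loop1 (mb : ℕ) : tgtG2 mb (2*mb+2) = 1 := by unfold tgtG2; split_ifs <;> omega

lemma tgt_add_src (mb : ℕ) {e : ℕ} (he : e < 2*mb+3) (h0 : e ≠ 2*mb) (h1 : e ≠ 2*mb+2) :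
    tgtG2 mb e + srcG2 mb e = 1 := by
  unfold srcG2 tgtG2; split_ifs <;> omega

lemma ne_P0of {mb : ℕ} {σ : Equiv.Perm (Fin (2*mb+3))} {t : ℕ} {ht : t < 2*mb+3}
    (h0 : t ≠ P0of mb σ) : (σ ⟨t, ht⟩ : ℕ) ≠ 2*mb := by
  intro h
  apply h0
  have h' : σ ⟨t, ht⟩ = (⟨2*mb, by omega⟩ : Fin (2*mb+3)) := Fin.ext h
  have h2 := congrArg σ.symm h'
  rw [Equiv.symm_apply_apply] at h2
  exact congrArg Fin.val h2

lemma ne_P1of {mb : ℕ} {σ : Equiv.Perm (Fin (2*mb+3))} {t : ℕ} {ht : t < 2*mb+3}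
    (h1 : t ≠ P1of mb σ) : (σ ⟨t, ht⟩ : ℕ) ≠ 2*mb+2 := by
  intro h
  apply h1
  have h' : σ ⟨t, ht⟩ = (⟨2*mb+2, by omega⟩ : Fin (2*mb+3)) := Fin.ext h
  have h2 := congrArg σ.symm h'
  rw [Equiv.symm_apply_apply] at h2
  exact congrArg Fin.val h2

lemma vert (mb : ℕ) (σ : Equiv.Perm (Fin (2*mb+3)))
    (hE : IsEulerianTrail (fun i => srcG2 mb i) (fun i => tgtG2 mb i) 0 1 σ) :
    ∀ t (ht : t < 2*mb+3),
      srcG2 mb (σ ⟨t, ht⟩ : ℕ) = uOf (P0of mb σ) (P1of mb σ) t % 2 := by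
  have hne := P0of_ne_P1of mb σ
  intro t
  induction t with
  | zero =>
    intro ht
    have h := (hE.1 (by omega)).1
    have h0eq : uOf (P0of mb σ) (P1of mb σ) 0 = 0 := by unfold uOf; split_ifs <;> omega
    rw [h0eq]
    exact h
  | succ t ih =>
    intro ht
    have ht' : t < 2*mb+3 := by omega
    have hchain : srcG2 mb (σ ⟨t+1, ht⟩ : ℕ) = tgtG2 mb (σ ⟨t, ht'⟩ : ℕ) := hE.2 t ht
    have ihv := ih ht'
    rw [uOf_succ hne]
    by_cases h0 : t = P0of mb σ
    · rw [if_pos (Or.inl h0)]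
      have hσ : σ ⟨t, ht'⟩ = (⟨2*mb, by omega⟩ : Fin (2*mb+3)) := by
        subst h0; exact sigma_at_P0of mb σ
      have hc2 : srcG2 mb (σ ⟨t+1, ht⟩ : ℕ) = tgtG2 mb (2*mb) := by rw [hchain, hσ]
      have hi2 : srcG2 mb (2*mb) = uOf (P0of mb σ) (P1of mb σ) t % 2 := by rw [← ihv, hσ]
      have := src_loop0 mb; have := tgt_loop0 mb
      omega
    · by_cases h1 : t = P1of mb σ
      · rw [if_pos (Or.inr h1)]
        have hσ : σ ⟨t, ht'⟩ = (⟨2*mb+2, by omega⟩ : Fin (2*mb+3)) := by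
          subst h1; exact sigma_at_P1of mb σ
        have hc2 : srcG2 mb (σ ⟨t+1, ht⟩ : ℕ) = tgtG2 mb (2*mb+2) := by rw [hchain, hσ]
        have hi2 : srcG2 mb (2*mb+2) = uOf (P0of mb σ) (P1of mb σ) t % 2 := by rw [← ihv, hσ]
        have := src_loop1 mb; have := tgt_loop1 mb
        omega
      · rw [if_neg (by tauto)]
        have hkey := tgt_add_src mb (σ ⟨t, ht'⟩).isLt (ne_P0of h0) (ne_P1of h1)
        omega

lemma classify (mb : ℕ) (σ : Equiv.Perm (Fin (2*mb+3)))
    (hE : IsEulerianTrail (fun i => srcG2 mb i) (fun i => tgtG2 mb i) 0 1 σ)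
    {t : ℕ} (ht : t < 2*mb+3) (h0 : t ≠ P0of mb σ) (h1 : t ≠ P1of mb σ) :
    (uOf (P0of mb σ) (P1of mb σ) t % 2 = 0 →
      ((σ ⟨t, ht⟩ : ℕ) % 2 = 0 ∧ (σ ⟨t, ht⟩ : ℕ) < 2*mb) ∨ (σ ⟨t, ht⟩ : ℕ) = 2*mb+1) ∧
    (uOf (P0of mb σ) (P1of mb σ) t % 2 = 1 →
      (σ ⟨t, ht⟩ : ℕ) % 2 = 1 ∧ (σ ⟨t, ht⟩ : ℕ) < 2*mb) := by
  have hv := vert mb σ hE t ht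
  have hne0 := ne_P0of (ht := ht) h0
  have hne1 := ne_P1of (ht := ht) h1
  have hlt := (σ ⟨t, ht⟩).isLt
  unfold srcG2 at hv
  split_ifs at hv <;> omega

lemma struct_par (mb : ℕ) (σ : Equiv.Perm (Fin (2*mb+3)))
    (hE : IsEulerianTrail (fun i => srcG2 mb i) (fun i => tgtG2 mb i) 0 1 σ) :
    uOf (P0of mb σ) (P1of mb σ) (P0of mb σ) % 2 = 0 ∧
    uOf (P0of mb σ) (P1of mb σ) (P1of mb σ) % 2 = 1 := by
  constructor
  · have hv := vert mb σ hE (P0of mb σ) (P0of_lt mb σ)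
    rw [sigma_at_P0of mb σ] at hv
    rw [← hv]
    exact src_loop0 mb
  · have hv := vert mb σ hE (P1of mb σ) (P1of_lt mb σ)
    rw [sigma_at_P1of mb σ] at hv
    rw [← hv]
    exact src_loop1 mb
def pN (mb : ℕ) (σ : Equiv.Perm (Fin (2*mb+3))) : ℕ :=
  if P0of mb σ < P1of mb σ then P0of mb σ / 2 else (P0of mb σ - 1) / 2

def qN (mb : ℕ) (σ : Equiv.Perm (Fin (2*mb+3))) : ℕ :=
  if P0of mb σ < P1of mb σ then (P1of mb σ - 2) / 2 else (P1of mb σ - 1) / 2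

def pOf (mb : ℕ) (σ : Equiv.Perm (Fin (2*mb+3))) : Fin (mb+1) :=
  ⟨pN mb σ % (mb+1), Nat.mod_lt _ (Nat.succ_pos mb)⟩

def qOf (mb : ℕ) (σ : Equiv.Perm (Fin (2*mb+3))) : Fin (mb+1) :=
  ⟨qN mb σ % (mb+1), Nat.mod_lt _ (Nat.succ_pos mb)⟩

lemma pq_facts (mb : ℕ) (σ : Equiv.Perm (Fin (2*mb+3)))
    (hE : IsEulerianTrail (fun i => srcG2 mb i) (fun i => tgtG2 mb i) 0 1 σ) :
    pos0 mb (pOf mb σ) (qOf mb σ) = P0of mb σ ∧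
    pos1 mb (pOf mb σ) (qOf mb σ) = P1of mb σ := by
  obtain ⟨hp0, hp1⟩ := struct_par mb σ hE
  have hne := P0of_ne_P1of mb σ
  have h0k := P0of_lt mb σ
  have h1k := P1of_lt mb σ
  have key0 : (P0of mb σ) % 2 = (if P1of mb σ < P0of mb σ then 1 else 0) := by
    unfold uOf at hp0; split_ifs at hp0 ⊢ <;> omega
  have key1 : (P1of mb σ) % 2 = (if P0of mb σ < P1of mb σ then 0 else 1) := by
    unfold uOf at hp1; split_ifs at hp1 ⊢ <;> omega
  have hple : pN mb σ ≤ mb ∧ qN mb σ ≤ mb := by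
    unfold pN qN; split_ifs at * <;> omega
  have hp : (pOf mb σ : ℕ) = pN mb σ := Nat.mod_eq_of_lt (by omega)
  have hq : (qOf mb σ : ℕ) = qN mb σ := Nat.mod_eq_of_lt (by omega)
  constructor
  · unfold pos0; rw [hp, hq]; unfold pN qN; split_ifs at * <;> omega
  · unfold pos1; rw [hp, hq]; unfold pN qN; split_ifs at * <;> omega

def fEx (mb : ℕ) (σ : Equiv.Perm (Fin (2*mb+3))) : Fin (mb+1) → Fin (mb+1) := fun j =>
  ⟨feInv mb (σ ⟨tEnc (P0of mb σ) (P1of mb σ) (2*(j:ℕ)), by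
      have := tEnc_le (P0of mb σ) (P1of mb σ) (2*(j:ℕ)); have := j.isLt; omega⟩ : ℕ)
      % (mb+1),
    Nat.mod_lt _ (Nat.succ_pos mb)⟩

def bEx (mb : ℕ) (σ : Equiv.Perm (Fin (2*mb+3))) : Fin mb → Fin mb := fun j =>
  ⟨(σ ⟨tEnc (P0of mb σ) (P1of mb σ) (2*(j:ℕ)+1), by
      have := tEnc_le (P0of mb σ) (P1of mb σ) (2*(j:ℕ)+1); have := j.isLt; omega⟩ : ℕ) / 2
      % mb,
    Nat.mod_lt _ (by have := j.isLt; omega)⟩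

lemma fEx_eq (mb : ℕ) (σ : Equiv.Perm (Fin (2*mb+3)))
    (hE : IsEulerianTrail (fun i => srcG2 mb i) (fun i => tgtG2 mb i) 0 1 σ)
    (j : Fin (mb+1)) :
    ∃ (t : ℕ) (ht : t < 2*mb+3),
      uOf (P0of mb σ) (P1of mb σ) t = 2*(j:ℕ) ∧
      tEnc (P0of mb σ) (P1of mb σ) (2*(j:ℕ)) = t ∧
      (((σ ⟨t, ht⟩ : ℕ) % 2 = 0 ∧ (σ ⟨t, ht⟩ : ℕ) < 2*mb) ∨ (σ ⟨t, ht⟩ : ℕ) = 2*mb+1) ∧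
      (fEx mb σ j : ℕ) = feInv mb (σ ⟨t, ht⟩ : ℕ) := by
  have hne := P0of_ne_P1of mb σ
  have h0k := P0of_lt mb σ
  have h1k := P1of_lt mb σ
  have hju : 2*(j:ℕ) ≤ 2*mb := by have := j.isLt; omega
  obtain ⟨hs0, hs1, hsk, hsu⟩ := tEnc_spec (mb := mb) hne h0k h1k hju
  refine ⟨tEnc (P0of mb σ) (P1of mb σ) (2*(j:ℕ)), hsk, hsu, rfl, ?_, ?_⟩
  · exact (classify mb σ hE hsk hs0 hs1).1 (by omega)
  · have hcl := (classify mb σ hE hsk hs0 hs1).1 (by omega)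
    have hle := feInv_le (mb := mb) hcl
    exact Nat.mod_eq_of_lt (by omega)

lemma bEx_eq (mb : ℕ) (σ : Equiv.Perm (Fin (2*mb+3)))
    (hE : IsEulerianTrail (fun i => srcG2 mb i) (fun i => tgtG2 mb i) 0 1 σ)
    (j : Fin mb) :
    ∃ (t : ℕ) (ht : t < 2*mb+3),
      uOf (P0of mb σ) (P1of mb σ) t = 2*(j:ℕ)+1 ∧
      tEnc (P0of mb σ) (P1of mb σ) (2*(j:ℕ)+1) = t ∧
      ((σ ⟨t, ht⟩ : ℕ) % 2 = 1 ∧ (σ ⟨t, ht⟩ : ℕ) < 2*mb) ∧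
      (bEx mb σ j : ℕ) = (σ ⟨t, ht⟩ : ℕ) / 2 := by
  have hne := P0of_ne_P1of mb σ
  have h0k := P0of_lt mb σ
  have h1k := P1of_lt mb σ
  have hju : 2*(j:ℕ)+1 ≤ 2*mb := by have := j.isLt; omega
  obtain ⟨hs0, hs1, hsk, hsu⟩ := tEnc_spec (mb := mb) hne h0k h1k hju
  refine ⟨tEnc (P0of mb σ) (P1of mb σ) (2*(j:ℕ)+1), hsk, hsu, rfl, ?_, ?_⟩
  · exact (classify mb σ hE hsk hs0 hs1).2 (by omega)
  · have hcl := (classify mb σ hE hsk hs0 hs1).2 (by omega)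
    exact Nat.mod_eq_of_lt (by omega)

lemma fEx_inj (mb : ℕ) (σ : Equiv.Perm (Fin (2*mb+3)))
    (hE : IsEulerianTrail (fun i => srcG2 mb i) (fun i => tgtG2 mb i) 0 1 σ) :
    Function.Injective (fEx mb σ) := by
  intro j1 j2 h
  obtain ⟨t1, ht1, hu1, hE1, hc1, hv1⟩ := fEx_eq mb σ hE j1
  obtain ⟨t2, ht2, hu2, hE2, hc2, hv2⟩ := fEx_eq mb σ hE j2
  have hval := congrArg Fin.val h
  rw [hv1, hv2] at hval
  have he : (σ ⟨t1, ht1⟩ : ℕ) = (σ ⟨t2, ht2⟩ : ℕ) := by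
    unfold feInv at hval; split_ifs at hval <;> omega
  have hσ := σ.injective (Fin.ext he)
  have htt : t1 = t2 := congrArg Fin.val hσ
  subst htt
  apply Fin.ext
  omega

lemma bEx_inj (mb : ℕ) (σ : Equiv.Perm (Fin (2*mb+3)))
    (hE : IsEulerianTrail (fun i => srcG2 mb i) (fun i => tgtG2 mb i) 0 1 σ) :
    Function.Injective (bEx mb σ) := by
  intro j1 j2 h
  obtain ⟨t1, ht1, hu1, hE1, hc1, hv1⟩ := bEx_eq mb σ hE j1
  obtain ⟨t2, ht2, hu2, hE2, hc2, hv2⟩ := bEx_eq mb σ hE j2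
  have hval := congrArg Fin.val h
  rw [hv1, hv2] at hval
  have he : (σ ⟨t1, ht1⟩ : ℕ) = (σ ⟨t2, ht2⟩ : ℕ) := by omega
  have hσ := σ.injective (Fin.ext he)
  have htt : t1 = t2 := congrArg Fin.val hσ
  subst htt
  apply Fin.ext
  omega

def fOf (mb : ℕ) (σ : Equiv.Perm (Fin (2*mb+3))) : Equiv.Perm (Fin (mb+1)) :=
  if h : Function.Bijective (fEx mb σ) then Equiv.ofBijective _ h else Equiv.refl _

def bOf (mb : ℕ) (σ : Equiv.Perm (Fin (2*mb+3))) : Equiv.Perm (Fin mb) :=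
  if h : Function.Bijective (bEx mb σ) then Equiv.ofBijective _ h else Equiv.refl _

lemma fOf_apply (mb : ℕ) (σ : Equiv.Perm (Fin (2*mb+3)))
    (hinj : Function.Injective (fEx mb σ)) (j : Fin (mb+1)) :
    fOf mb σ j = fEx mb σ j := by
  unfold fOf
  rw [dif_pos (Finite.injective_iff_bijective.mp hinj)]
  rfl

lemma bOf_apply (mb : ℕ) (σ : Equiv.Perm (Fin (2*mb+3)))
    (hinj : Function.Injective (bEx mb σ)) (j : Fin mb) :
    bOf mb σ j = bEx mb σ j := by
  unfold bOf
  rw [dif_pos (Finite.injective_iff_bijective.mp hinj)]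
  rfl
lemma sigma_eq_phiV (mb : ℕ) (σ : Equiv.Perm (Fin (2*mb+3)))
    (hE : IsEulerianTrail (fun i => srcG2 mb i) (fun i => tgtG2 mb i) 0 1 σ)
    {t : ℕ} (ht : t < 2*mb+3) :
    (σ ⟨t, ht⟩ : ℕ) = phiV mb (fOf mb σ) (bOf mb σ) (pOf mb σ) (qOf mb σ) t := by
  obtain ⟨hpos0, hpos1⟩ := pq_facts mb σ hE
  have hne := P0of_ne_P1of mb σ
  have h0k := P0of_lt mb σ
  have h1k := P1of_lt mb σ
  unfold phiV phiN
  rw [hpos0, hpos1]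
  by_cases h0 : t = P0of mb σ
  · rw [if_pos h0]
    subst h0
    exact congrArg Fin.val (sigma_at_P0of mb σ)
  · rw [if_neg h0]
    by_cases h1 : t = P1of mb σ
    · rw [if_pos h1]
      subst h1
      exact congrArg Fin.val (sigma_at_P1of mb σ)
    · rw [if_neg h1]
      obtain ⟨hu, htE⟩ := uOf_spec (mb := mb) hne h0 h1 h0k h1k ht
      set u := uOf (P0of mb σ) (P1of mb σ) t with hudef
      by_cases hpar : u % 2 = 0
      · rw [if_pos hpar]
        obtain ⟨t', ht', hu', htE', hc', hv'⟩ := fEx_eq mb σ hE ⟨u/2, by omega⟩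
        simp only [Fin.val_mk] at hu' htE' hv'
        have h2u : 2*(u/2) = u := by omega
        rw [h2u] at hu' htE'
        have htt : t' = t := by rw [← htE', htE]
        subst htt
        unfold fN
        rw [fOf_apply mb σ (fEx_inj mb σ hE)]
        have hidx : (⟨u/2 % (mb+1), Nat.mod_lt _ (Nat.succ_pos mb)⟩ : Fin (mb+1))
            = ⟨u/2, by omega⟩ := Fin.ext (Nat.mod_eq_of_lt (by omega))
        rw [hidx, hv', feW_feInv hc']
      · rw [if_neg hpar]
        have hjm : u/2 < mb := by omega
        obtain ⟨t', ht', hu', htE', hc', hv'⟩ := bEx_eq mb σ hE ⟨u/2, hjm⟩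
        simp only [Fin.val_mk] at hu' htE' hv'
        have h2u : 2*(u/2)+1 = u := by omega
        rw [h2u] at hu' htE'
        have htt : t' = t := by rw [← htE', htE]
        subst htt
        unfold bN
        rw [dif_pos hjm]
        rw [bOf_apply mb σ (bEx_inj mb σ hE)]
        rw [hv']
        omega

lemma phi_psi (mb : ℕ) (σ : Equiv.Perm (Fin (2*mb+3)))
    (hE : IsEulerianTrail (fun i => srcG2 mb i) (fun i => tgtG2 mb i) 0 1 σ) :
    phiPerm mb (fOf mb σ) (bOf mb σ) (pOf mb σ) (qOf mb σ) = σ := by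
  apply Equiv.ext
  intro x
  apply Fin.ext
  rw [phiPerm_apply]
  exact (sigma_eq_phiV mb σ hE x.isLt).symm
lemma P0of_phiPerm (mb : ℕ) (f : Equiv.Perm (Fin (mb+1))) (b : Equiv.Perm (Fin mb))
    (p q : Fin (mb+1)) : P0of mb (phiPerm mb f b p q) = pos0 mb p q := by
  obtain ⟨hne, hb0, hb1, -, -⟩ := pos_facts mb p q
  have happ : phiPerm mb f b p q ⟨pos0 mb p q, by omega⟩ = ⟨2*mb, by omega⟩ := by
    apply Fin.ext
    rw [phiPerm_apply]
    show phiV mb f b p q (pos0 mb p q) = 2*mb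
    unfold phiV phiN; rw [if_pos rfl]
  have h2 : (phiPerm mb f b p q).symm ⟨2*mb, by omega⟩ = ⟨pos0 mb p q, by omega⟩ := by
    rw [Equiv.symm_apply_eq]; exact happ.symm
  exact congrArg Fin.val h2

lemma P1of_phiPerm (mb : ℕ) (f : Equiv.Perm (Fin (mb+1))) (b : Equiv.Perm (Fin mb))
    (p q : Fin (mb+1)) : P1of mb (phiPerm mb f b p q) = pos1 mb p q := by
  obtain ⟨hne, hb0, hb1, -, -⟩ := pos_facts mb p q
  have happ : phiPerm mb f b p q ⟨pos1 mb p q, by omega⟩ = ⟨2*mb+2, by omega⟩ := by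
    apply Fin.ext
    rw [phiPerm_apply]
    show phiV mb f b p q (pos1 mb p q) = 2*mb+2
    unfold phiV phiN; rw [if_neg (Ne.symm hne), if_pos rfl]
  have h2 : (phiPerm mb f b p q).symm ⟨2*mb+2, by omega⟩ = ⟨pos1 mb p q, by omega⟩ := by
    rw [Equiv.symm_apply_eq]; exact happ.symm
  exact congrArg Fin.val h2

lemma pOf_phiPerm (mb : ℕ) (f : Equiv.Perm (Fin (mb+1))) (b : Equiv.Perm (Fin mb))
    (p q : Fin (mb+1)) : pOf mb (phiPerm mb f b p q) = p := by
  have hp := p.isLt; have hq := q.isLt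
  apply Fin.ext
  show pN mb (phiPerm mb f b p q) % (mb+1) = (p : ℕ)
  unfold pN
  rw [P0of_phiPerm, P1of_phiPerm]
  have : (if pos0 mb p q < pos1 mb p q then pos0 mb p q / 2 else (pos0 mb p q - 1) / 2)
      = (p : ℕ) := by
    unfold pos0 pos1; split_ifs <;> omega
  rw [this, Nat.mod_eq_of_lt hp]

lemma qOf_phiPerm (mb : ℕ) (f : Equiv.Perm (Fin (mb+1))) (b : Equiv.Perm (Fin mb))
    (p q : Fin (mb+1)) : qOf mb (phiPerm mb f b p q) = q := by
  have hp := p.isLt; have hq := q.isLt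
  apply Fin.ext
  show qN mb (phiPerm mb f b p q) % (mb+1) = (q : ℕ)
  unfold qN
  rw [P0of_phiPerm, P1of_phiPerm]
  have : (if pos0 mb p q < pos1 mb p q then (pos1 mb p q - 2) / 2 else (pos1 mb p q - 1) / 2)
      = (q : ℕ) := by
    unfold pos0 pos1; split_ifs <;> omega
  rw [this, Nat.mod_eq_of_lt hq]

lemma fEx_phiPerm (mb : ℕ) (f : Equiv.Perm (Fin (mb+1))) (b : Equiv.Perm (Fin mb))
    (p q : Fin (mb+1)) : fEx mb (phiPerm mb f b p q) = ⇑f := by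
  obtain ⟨hne, hb0, hb1, -, -⟩ := pos_facts mb p q
  funext j
  apply Fin.ext
  have hju : 2*(j:ℕ) ≤ 2*mb := by have := j.isLt; omega
  obtain ⟨hs0, hs1, hsk, hsu⟩ := tEnc_spec (mb := mb) hne (by omega) (by omega) hju
  have hidx : (⟨tEnc (P0of mb (phiPerm mb f b p q)) (P1of mb (phiPerm mb f b p q)) (2*(j:ℕ)),
      by have := tEnc_le (P0of mb (phiPerm mb f b p q)) (P1of mb (phiPerm mb f b p q)) (2*(j:ℕ));
         have := j.isLt; omega⟩ : Fin (2*mb+3))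
      = ⟨tEnc (pos0 mb p q) (pos1 mb p q) (2*(j:ℕ)), hsk⟩ := by
    apply Fin.ext
    simp only [Fin.val_mk]
    rw [P0of_phiPerm, P1of_phiPerm]
  show feInv mb ((phiPerm mb f b p q) _ : ℕ) % (mb+1) = (f j : ℕ)
  rw [hidx, phiPerm_apply]
  unfold phiV phiN
  rw [if_neg hs0, if_neg hs1, hsu]
  rw [if_pos (by omega : 2*(j:ℕ) % 2 = 0)]
  have h2j : 2*(j:ℕ)/2 = (j:ℕ) := by omega
  rw [h2j]
  unfold fN
  have hj' : (⟨(j:ℕ) % (mb+1), Nat.mod_lt _ (Nat.succ_pos mb)⟩ : Fin (mb+1)) = j :=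
    Fin.ext (Nat.mod_eq_of_lt j.isLt)
  rw [hj']
  rw [feInv_feW (Nat.lt_succ_iff.mp (f j).isLt)]
  exact Nat.mod_eq_of_lt (f j).isLt

lemma bEx_phiPerm (mb : ℕ) (f : Equiv.Perm (Fin (mb+1))) (b : Equiv.Perm (Fin mb))
    (p q : Fin (mb+1)) : bEx mb (phiPerm mb f b p q) = ⇑b := by
  obtain ⟨hne, hb0, hb1, -, -⟩ := pos_facts mb p q
  funext j
  apply Fin.ext
  have hju : 2*(j:ℕ)+1 ≤ 2*mb := by have := j.isLt; omega
  obtain ⟨hs0, hs1, hsk, hsu⟩ := tEnc_spec (mb := mb) hne (by omega) (by omega) hju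
  have hidx : (⟨tEnc (P0of mb (phiPerm mb f b p q)) (P1of mb (phiPerm mb f b p q)) (2*(j:ℕ)+1),
      by have := tEnc_le (P0of mb (phiPerm mb f b p q)) (P1of mb (phiPerm mb f b p q)) (2*(j:ℕ)+1);
         have := j.isLt; omega⟩ : Fin (2*mb+3))
      = ⟨tEnc (pos0 mb p q) (pos1 mb p q) (2*(j:ℕ)+1), hsk⟩ := by
    apply Fin.ext
    simp only [Fin.val_mk]
    rw [P0of_phiPerm, P1of_phiPerm]
  show ((phiPerm mb f b p q) _ : ℕ) / 2 % mb = (b j : ℕ)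
  rw [hidx, phiPerm_apply]
  unfold phiV phiN
  rw [if_neg hs0, if_neg hs1, hsu]
  rw [if_neg (by omega : ¬((2*(j:ℕ)+1) % 2 = 0))]
  have h2j : (2*(j:ℕ)+1)/2 = (j:ℕ) := by omega
  rw [h2j]
  unfold bN
  rw [dif_pos j.isLt]
  have hj' : (⟨(j:ℕ), j.isLt⟩ : Fin mb) = j := Fin.ext rfl
  rw [hj']
  have : (2 * (b j : ℕ) + 1) / 2 = (b j : ℕ) := by omega
  rw [this]
  exact Nat.mod_eq_of_lt (b j).isLt

lemma fOf_phiPerm (mb : ℕ) (f : Equiv.Perm (Fin (mb+1))) (b : Equiv.Perm (Fin mb))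
    (p q : Fin (mb+1)) : fOf mb (phiPerm mb f b p q) = f := by
  have hfe := fEx_phiPerm mb f b p q
  have hinj : Function.Injective (fEx mb (phiPerm mb f b p q)) := by
    rw [hfe]; exact f.injective
  apply Equiv.ext
  intro j
  rw [fOf_apply mb _ hinj, hfe]

lemma bOf_phiPerm (mb : ℕ) (f : Equiv.Perm (Fin (mb+1))) (b : Equiv.Perm (Fin mb))
    (p q : Fin (mb+1)) : bOf mb (phiPerm mb f b p q) = b := by
  have hbe := bEx_phiPerm mb f b p q
  have hinj : Function.Injective (bEx mb (phiPerm mb f b p q)) := by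
    rw [hbe]; exact b.injective
  apply Equiv.ext
  intro j
  rw [bOf_apply mb _ hinj, hbe]

end G2

/-- `G₂` has exactly `((m̄+1)!)²·(m̄+1)` Eulerian trails from `1` to `2`. -/
theorem card_eulerian_G2 (mb : ℕ) (hmb : 1 ≤ mb) :
    (Finset.univ.filter fun σ : Equiv.Perm (Fin (2 * mb + 3)) =>
        IsEulerianTrail (fun i => srcG2 mb i) (fun i => tgtG2 mb i) 0 1 σ).card
      = (Nat.factorial (mb + 1)) ^ 2 * (mb + 1) := by
  classical
  have h1 : (Finset.univ.filter fun σ : Equiv.Perm (Fin (2 * mb + 3)) =>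
        IsEulerianTrail (fun i => srcG2 mb i) (fun i => tgtG2 mb i) 0 1 σ).card
      = Fintype.card (Equiv.Perm (Fin (mb+1)) × Equiv.Perm (Fin mb) × Fin (mb+1) × Fin (mb+1)) := by
    rw [← Finset.card_univ]
    refine Finset.card_bij'
      (fun σ _ => (G2.fOf mb σ, G2.bOf mb σ, G2.pOf mb σ, G2.qOf mb σ))
      (fun d _ => G2.phiPerm mb d.1 d.2.1 d.2.2.1 d.2.2.2)
      (fun σ hσ => Finset.mem_univ _)
      (fun d hd => ?_) (fun σ hσ => ?_) (fun d hd => ?_)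
    · rw [Finset.mem_filter]
      exact ⟨Finset.mem_univ _, G2.phiPerm_eulerian mb d.1 d.2.1 d.2.2.1 d.2.2.2⟩
    · have hE := (Finset.mem_filter.mp hσ).2
      exact G2.phi_psi mb σ hE
    · obtain ⟨f, b, p, q⟩ := d
      show (G2.fOf mb (G2.phiPerm mb f b p q), G2.bOf mb (G2.phiPerm mb f b p q),
        G2.pOf mb (G2.phiPerm mb f b p q), G2.qOf mb (G2.phiPerm mb f b p q)) = (f, b, p, q)
      rw [G2.fOf_phiPerm, G2.bOf_phiPerm, G2.pOf_phiPerm, G2.qOf_phiPerm]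
  rw [h1]
  simp only [Fintype.card_prod, Fintype.card_perm, Fintype.card_fin]
  rw [Nat.factorial_succ, pow_two]
  ring


end
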